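/- Let n, m be positive integers, let lb, ub : Fin m → ℤ, and let Z and O be arbitrary subsets of Fin n × Fin m. Let Q be the set of all f : Fin n → Fin m → ℝ such that f i j ≥ 0 for all i, j; Σ_j f i j = 1 for every i; (lb j : ℝ) ≤ Σ_i f i j ≤ (ub j : ℝ) for every j; f i j = 0 for all (i, j) ∈ Z; and f i j = 1 for all (i, j) ∈ O. Then every extreme point of Q has all entries in {0,1}. -/

import Mathlib

open Finset

lemma sumIsInt {ι : Type*} (s : Finset ι) (v : ι → ℝ)
    (h : ∀ i ∈ s, ∃ k : ℤ, v i = (k : ℝ)) : ∃ K : ℤ, ∑ i ∈ s, v i = (K : ℝ) := by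
  classical
  have := Finset.sum_induction v (fun x => ∃ K : ℤ, x = (K:ℝ))
    (by rintro a b ⟨k, rfl⟩ ⟨l, rfl⟩; exact ⟨k + l, by push_cast; ring⟩)
    ⟨0, by simp⟩ h
  exact this

lemma notCardOne {ι : Type*} [Fintype ι] [DecidableEq ι] (v : ι → ℝ)
    [DecidablePred (fun i => v i ≠ 0 ∧ v i ≠ 1)]
    (h0 : ∀ i, 0 ≤ v i) (h1 : ∀ i, v i ≤ 1) (k : ℤ) (hs : ∑ i, v i = (k:ℝ)) :
    (univ.filter (fun i => v i ≠ 0 ∧ v i ≠ 1)).card ≠ 1 := by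
  intro hc
  obtain ⟨i0, hi0⟩ := Finset.card_eq_one.mp hc
  have hmem : i0 ∈ univ.filter (fun i => v i ≠ 0 ∧ v i ≠ 1) := by
    rw [hi0]; exact Finset.mem_singleton_self i0
  have hfrac : v i0 ≠ 0 ∧ v i0 ≠ 1 := (Finset.mem_filter.mp hmem).2
  have hothers : ∀ i ∈ univ.erase i0, ∃ l : ℤ, v i = (l:ℝ) := by
    intro i hi
    have hne : i ≠ i0 := (Finset.mem_erase.mp hi).1
    have : i ∉ univ.filter (fun i => v i ≠ 0 ∧ v i ≠ 1) := by
      rw [hi0]; simp [hne]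
    simp only [Finset.mem_filter, Finset.mem_univ, true_and, not_and_or, not_not] at this
    rcases this with h | h
    · exact ⟨0, by simp [h]⟩
    · exact ⟨1, by simp [h]⟩
  obtain ⟨K, hK⟩ := sumIsInt _ _ hothers
  have hsum : v i0 + ∑ i ∈ univ.erase i0, v i = (k:ℝ) := by
    rw [← hs, Finset.add_sum_erase _ _ (Finset.mem_univ i0)]
  have hval : v i0 = ((k - K : ℤ) : ℝ) := by push_cast; linarith
  have h01 : 0 < v i0 := lt_of_le_of_ne (h0 i0) (Ne.symm hfrac.1)
  have h11 : v i0 < 1 := lt_of_le_of_ne (h1 i0) hfrac.2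
  rw [hval] at h01 h11
  have hA : (0:ℤ) < k - K := by exact_mod_cast h01
  have hB : (k - K : ℤ) < 1 := by exact_mod_cast h11
  omega

lemma cardFilterProd {α β : Type*} [Fintype α] [Fintype β] (p : α × β → Prop) [DecidablePred p] :
    (univ.filter p).card = ∑ a : α, (univ.filter (fun b => p (a, b))).card := by
  classical
  simp only [Finset.card_filter]
  rw [← Finset.univ_product_univ, Finset.sum_product]

lemma cardFilterProd' {α β : Type*} [Fintype α] [Fintype β] (p : α × β → Prop) [DecidablePred p] :
    (univ.filter p).card = ∑ b : β, (univ.filter (fun a => p (a, b))).card := by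
  classical
  simp only [Finset.card_filter]
  rw [← Finset.univ_product_univ, Finset.sum_product_right]
set_option maxHeartbeats 1000000 in
theorem bin_counts_fixed_polyhedron_extremePoints_zero_one
    (n m : ℕ) (hn : 0 < n) (hm : 0 < m) (lb ub : Fin m → ℤ)
    (Z O : Set (Fin n × Fin m))
    (Q : Set (Fin n → Fin m → ℝ))
    (hQ : Q = {f | (∀ i j, 0 ≤ f i j) ∧ (∀ i, ∑ j, f i j = 1) ∧
      (∀ j, (lb j : ℝ) ≤ ∑ i, f i j ∧ ∑ i, f i j ≤ (ub j : ℝ)) ∧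
      (∀ p ∈ Z, f p.1 p.2 = 0) ∧ (∀ p ∈ O, f p.1 p.2 = 1)}) :
    ∀ f ∈ Set.extremePoints ℝ Q, ∀ i j, f i j = 0 ∨ f i j = 1 := by
  classical
  rintro f ⟨hfQ, hext⟩ i0 j0
  by_contra hcon
  push_neg at hcon
  rw [hQ] at hfQ
  obtain ⟨hpos, hrow, hcolb, hZs, hOs⟩ := hfQ
  set frac : Fin n × Fin m → Prop := fun p => f p.1 p.2 ≠ 0 ∧ f p.1 p.2 ≠ 1 with hfrac_def
  have hfr0 : frac (i0, j0) := ⟨hcon.1, hcon.2⟩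
  have hle1 : ∀ i j, f i j ≤ 1 := by
    intro i j
    have h1 : f i j ≤ ∑ j', f i j' :=
      Finset.single_le_sum (fun j' _ => hpos i j') (Finset.mem_univ j)
    rw [hrow i] at h1; exact h1
  -- degree counts
  set dR : Fin n → ℕ := fun i => (Finset.univ.filter (fun j => frac (i, j))).card with hdR_def
  set dC : Fin m → ℕ := fun j => (Finset.univ.filter (fun i => frac (i, j))).card with hdC_def
  have hdR2 : ∀ i, dR i ≠ 0 → 2 ≤ dR i := by
    intro i hne
    have h1 : dR i ≠ 1 := by
      have := notCardOne (fun j => f i j) (hpos i) (hle1 i) 1 (by exact_mod_cast hrow i)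
      simpa [hdR_def, hfrac_def] using this
    omega
  have hdC2 : ∀ j, dC j ≠ 0 → (∃ k : ℤ, ∑ i, f i j = (k:ℝ)) → 2 ≤ dC j := by
    rintro j hne ⟨k, hk⟩
    have h1 : dC j ≠ 1 := by
      have := notCardOne (fun i => f i j) (fun i => hpos i j) (fun i => hle1 i j) k hk
      simpa [hdC_def, hfrac_def] using this
    omega
  set Row : Fin n → Prop := fun i => dR i ≠ 0 with hRow_def
  set Con : Fin m → Prop := fun j => dC j ≠ 0 ∧ ∃ k : ℤ, ∑ i, f i j = (k:ℝ) with hCon_def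
  -- linear maps
  set E : ({p : Fin n × Fin m // frac p} → ℝ) →ₗ[ℝ] (Fin n → Fin m → ℝ) :=
    { toFun := fun g i j => if h : frac (i, j) then g ⟨(i, j), h⟩ else 0
      map_add' := by
        intro a b; funext i j
        by_cases h : frac (i, j)
        · simp only [Pi.add_apply, dif_pos h]
        · simp only [Pi.add_apply, dif_neg h, add_zero]
      map_smul' := by
        intro c a; funext i j
        by_cases h : frac (i, j)
        · simp only [Pi.smul_apply, dif_pos h, smul_eq_mul, RingHom.id_apply]
        · simp only [Pi.smul_apply, dif_neg h, smul_eq_mul, mul_zero, RingHom.id_apply] } with hE_def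
  set L : (Fin n → Fin m → ℝ) →ₗ[ℝ] ({i // Row i} → ℝ) × ({j // Con j} → ℝ) :=
    { toFun := fun F => (fun i => ∑ j, F i.1 j, fun j => ∑ i, F i j.1)
      map_add' := by
        intro a b
        refine Prod.ext ?_ ?_ <;> funext x <;> simp [Finset.sum_add_distrib]
      map_smul' := by
        intro c a
        refine Prod.ext ?_ ?_ <;> funext x <;> simp [Finset.mul_sum] } with hL_def
  set Φ : ({p : Fin n × Fin m // frac p} → ℝ) →ₗ[ℝ] ({i // Row i} → ℝ) × ({j // Con j} → ℝ) :=
    L ∘ₗ E with hΦ_def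
  -- cardinalities
  set NF := (Finset.univ.filter frac).card with hNF_def
  set NR := (Finset.univ.filter Row).card with hNR_def
  set NC := (Finset.univ.filter Con).card with hNC_def
  have hNF_rows : NF = ∑ i, dR i := cardFilterProd frac
  have hNF_cols : NF = ∑ j, dC j := cardFilterProd' frac
  have hNFR : 2 * NR ≤ NF := by
    calc 2 * NR = ∑ _i ∈ Finset.univ.filter Row, 2 := by
          rw [Finset.sum_const, smul_eq_mul, mul_comm]
      _ ≤ ∑ i ∈ Finset.univ.filter Row, dR i :=
          Finset.sum_le_sum (fun i hi => hdR2 i (Finset.mem_filter.mp hi).2)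
      _ ≤ ∑ i, dR i := Finset.sum_le_sum_of_subset (Finset.filter_subset _ _)
      _ = NF := hNF_rows.symm
  have hi0R : Row i0 := by
    have hmem : j0 ∈ Finset.univ.filter (fun j => frac (i0, j)) :=
      Finset.mem_filter.mpr ⟨Finset.mem_univ _, hfr0⟩
    exact Finset.card_ne_zero_of_mem hmem
  have hNR1 : 1 ≤ NR := by
    have : i0 ∈ Finset.univ.filter Row := Finset.mem_filter.mpr ⟨Finset.mem_univ _, hi0R⟩
    exact Finset.card_pos.mpr ⟨i0, this⟩
  have hcardW : Module.finrank ℝ ({p : Fin n × Fin m // frac p} → ℝ) = NF := by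
    rw [Module.finrank_pi, Fintype.card_subtype]
  have hcardCod : Module.finrank ℝ (({i // Row i} → ℝ) × ({j // Con j} → ℝ)) = NR + NC := by
    rw [Module.finrank_prod, Module.finrank_pi, Module.finrank_pi,
      Fintype.card_subtype, Fintype.card_subtype]
  have hsumCon : 2 * NC ≤ ∑ j ∈ Finset.univ.filter Con, dC j := by
    calc 2 * NC = ∑ _j ∈ Finset.univ.filter Con, 2 := by
          rw [Finset.sum_const, smul_eq_mul, mul_comm]
      _ ≤ _ := Finset.sum_le_sum (fun j hj =>
          hdC2 j (Finset.mem_filter.mp hj).2.1 (Finset.mem_filter.mp hj).2.2)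
  have hrankΦ : Module.finrank ℝ (LinearMap.range Φ) < NF := by
    by_cases hA : ∃ j, dC j ≠ 0 ∧ ¬ Con j
    · obtain ⟨j1, hj1ne, hj1ncon⟩ := hA
      have hCj1 : j1 ∉ Finset.univ.filter Con := by
        simp only [Finset.mem_filter, Finset.mem_univ, true_and]; exact hj1ncon
      have hs1 : ∑ j ∈ insert j1 (Finset.univ.filter Con), dC j ≤ ∑ j, dC j :=
        Finset.sum_le_sum_of_subset (fun x _ => Finset.mem_univ x)
      rw [Finset.sum_insert hCj1] at hs1
      have hj11 : 1 ≤ dC j1 := Nat.one_le_iff_ne_zero.mpr hj1ne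
      have hcount : NR + NC < NF := by omega
      have hle : Module.finrank ℝ (LinearMap.range Φ) ≤ NR + NC := by
        rw [← hcardCod]
        exact Submodule.finrank_le _
      omega
    · push_neg at hA
      have hNFC : 2 * NC ≤ NF := by
        have : ∑ j ∈ Finset.univ.filter Con, dC j ≤ ∑ j, dC j :=
          Finset.sum_le_sum_of_subset (Finset.filter_subset _ _)
        omega
      set ψ : (({i // Row i} → ℝ) × ({j // Con j} → ℝ)) →ₗ[ℝ] ℝ :=
        { toFun := fun x => (∑ i, x.1 i) - (∑ j, x.2 j)
          map_add' := by
            intro a b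
            simp only [Prod.fst_add, Prod.snd_add, Pi.add_apply, Finset.sum_add_distrib]
            ring
          map_smul' := by
            intro c a
            simp only [Prod.smul_fst, Prod.smul_snd, Pi.smul_apply, smul_eq_mul,
              RingHom.id_apply, ← Finset.mul_sum]
            ring } with hψ_def
      have hsub : LinearMap.range Φ ≤ LinearMap.ker ψ := by
        rintro x ⟨g', rfl⟩
        rw [LinearMap.mem_ker]
        show (∑ i : {i // Row i}, ∑ j, (E g') i.1 j)
          - (∑ j : {j // Con j}, ∑ i, (E g') i j.1) = 0
        have hEzero_row : ∀ i, ¬ Row i → ∀ j, (E g') i j = 0 := by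
          intro i hi j
          have hdz : dR i = 0 := not_not.mp hi
          show (if h : frac (i, j) then g' ⟨(i, j), h⟩ else 0) = 0
          rw [dif_neg]
          intro hfij
          have hmem : j ∈ Finset.univ.filter (fun j => frac (i, j)) :=
            Finset.mem_filter.mpr ⟨Finset.mem_univ _, hfij⟩
          exact Finset.card_ne_zero_of_mem hmem hdz
        have hEzero_col : ∀ j, ¬ Con j → ∀ i, (E g') i j = 0 := by
          intro j hj i
          have hdz : dC j = 0 := by
            by_contra hne
            exact hj (hA j hne)
          show (if h : frac (i, j) then g' ⟨(i, j), h⟩ else 0) = 0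
          rw [dif_neg]
          intro hfij
          have hmem : i ∈ Finset.univ.filter (fun i => frac (i, j)) :=
            Finset.mem_filter.mpr ⟨Finset.mem_univ _, hfij⟩
          exact Finset.card_ne_zero_of_mem hmem hdz
        have hR : ∑ i : {i // Row i}, ∑ j, (E g') i.1 j = ∑ i, ∑ j, (E g') i j := by
          rw [← Finset.sum_subtype (Finset.univ.filter Row)
            (by intro x; simp) (fun i => ∑ j, (E g') i j)]
          exact Finset.sum_filter_of_ne (by
            intro i _ hne
            by_cases hi : Row i
            · exact hi
            · exact absurd (Finset.sum_eq_zero (fun j _ => hEzero_row i hi j)) hne)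
        have hC : ∑ j : {j // Con j}, ∑ i, (E g') i j.1 = ∑ i, ∑ j, (E g') i j := by
          rw [← Finset.sum_subtype (Finset.univ.filter Con)
            (by intro x; simp) (fun j => ∑ i, (E g') i j)]
          rw [Finset.sum_filter_of_ne (by
            intro j _ hne
            by_cases hj : Con j
            · exact hj
            · exact absurd (Finset.sum_eq_zero (fun i _ => hEzero_col j hj i)) hne)]
          exact Finset.sum_comm
        rw [hR, hC, sub_self]
      have hψne : ψ ≠ 0 := by
        intro h0
        have h1 : ψ ((fun i => if i = ⟨i0, hi0R⟩ then 1 else 0), 0) = 1 := by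
          show (∑ i : {i // Row i}, (if i = ⟨i0, hi0R⟩ then (1:ℝ) else 0))
            - (∑ j : {j // Con j}, (0:ℝ)) = 1
          rw [Finset.sum_ite_eq' Finset.univ (⟨i0, hi0R⟩ : {i // Row i}) (fun _ => (1:ℝ))]
          simp
        rw [h0] at h1
        simp at h1
      have hrψ : Module.finrank ℝ (LinearMap.range ψ) = 1 := by
        have hle : Module.finrank ℝ (LinearMap.range ψ) ≤ 1 := by
          have := Submodule.finrank_le (LinearMap.range ψ)
          simpa using this
        have hne : LinearMap.range ψ ≠ ⊥ :=
          fun hbot => hψne (LinearMap.range_eq_bot.mp hbot)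
        have h0 : Module.finrank ℝ (LinearMap.range ψ) ≠ 0 := by
          rw [Ne, Submodule.finrank_eq_zero]
          exact hne
        omega
      have hkψ := LinearMap.finrank_range_add_finrank_ker ψ
      rw [hcardCod, hrψ] at hkψ
      have hle2 : Module.finrank ℝ (LinearMap.range Φ) ≤
          Module.finrank ℝ (LinearMap.ker ψ) := Submodule.finrank_mono hsub
      omega
  have key : ∃ g : {p : Fin n × Fin m // frac p} → ℝ, g ≠ 0 ∧ Φ g = 0 := by
    have hrk := LinearMap.finrank_range_add_finrank_ker Φ
    rw [hcardW] at hrk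
    have hkerne : Module.finrank ℝ (LinearMap.ker Φ) ≠ 0 := by omega
    have hne : LinearMap.ker Φ ≠ ⊥ := by
      rw [Ne, ← Submodule.finrank_eq_zero]
      exact hkerne
    obtain ⟨g, hgmem, hgne⟩ := Submodule.exists_mem_ne_zero_of_ne_bot hne
    exact ⟨g, hgne, LinearMap.mem_ker.mp hgmem⟩
  obtain ⟨g, hg0, hgker⟩ := key
  set G : Fin n → Fin m → ℝ := E g with hG_def
  have hGsupp : ∀ i j, ¬ frac (i, j) → G i j = 0 := by
    intro i j h; simp [hG_def, hE_def, h]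
  have hGrow : ∀ i, ∑ j, G i j = 0 := by
    intro i
    by_cases hi : Row i
    · exact congrFun (congrArg Prod.fst hgker) ⟨i, hi⟩
    · have hdz : dR i = 0 := not_not.mp hi
      have hall : ∀ j, G i j = 0 := by
        intro j
        refine hGsupp i j (fun hfij => ?_)
        have hmem : j ∈ Finset.univ.filter (fun j => frac (i, j)) :=
          Finset.mem_filter.mpr ⟨Finset.mem_univ _, hfij⟩
        exact Finset.card_ne_zero_of_mem hmem hdz
      simp [hall]
  have hGcol : ∀ j, Con j ∨ dC j = 0 → ∑ i, G i j = 0 := by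
    rintro j (hj | hj)
    · exact congrFun (congrArg Prod.snd hgker) ⟨j, hj⟩
    · have hall : ∀ i, G i j = 0 := by
        intro i
        refine hGsupp i j (fun hfij => ?_)
        have hmem : i ∈ Finset.univ.filter (fun i => frac (i, j)) :=
          Finset.mem_filter.mpr ⟨Finset.mem_univ _, hfij⟩
        exact Finset.card_ne_zero_of_mem hmem hj
      simp [hall]
  -- a point where G is nonzero
  obtain ⟨q, hq⟩ := Function.ne_iff.mp hg0
  have hGq : G q.1.1 q.1.2 = g q := by
    have hfq : frac (q.1.1, q.1.2) := by rw [Prod.mk.eta]; exact q.2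
    show (if h : frac (q.1.1, q.1.2) then g ⟨(q.1.1, q.1.2), h⟩ else 0) = g q
    rw [dif_pos hfq]
  -- column sums of G that are nonzero force strictly interior column sums of f
  set colG : Fin m → ℝ := fun j => ∑ i, G i j with hcolG_def
  set σcol : Fin m → ℝ := fun j => ∑ i, f i j with hσ_def
  have hfree : ∀ j, colG j ≠ 0 → (lb j : ℝ) < σcol j ∧ σcol j < (ub j : ℝ) := by
    intro j hcg
    have hdcne : dC j ≠ 0 := fun hz => hcg (hGcol j (Or.inr hz))
    have hnotCon : ¬ Con j := fun hc => hcg (hGcol j (Or.inl hc))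
    have hnotint : ¬ ∃ k : ℤ, ∑ i, f i j = (k:ℝ) := fun hk => hnotCon ⟨hdcne, hk⟩
    obtain ⟨hlb, hub⟩ := hcolb j
    constructor
    · rcases lt_or_eq_of_le hlb with h | h
      · exact h
      · exact absurd ⟨lb j, h.symm⟩ hnotint
    · rcases lt_or_eq_of_le hub with h | h
      · exact h
      · exact absurd ⟨ub j, h⟩ hnotint
  -- choose ε
  have heps : ∃ ε : ℝ, 0 < ε ∧ (∀ p : Fin n × Fin m, frac p → ε * |G p.1 p.2| ≤ f p.1 p.2) ∧
      (∀ j, colG j ≠ 0 → ε * |colG j| ≤ σcol j - (lb j : ℝ) ∧ ε * |colG j| ≤ (ub j : ℝ) - σcol j) := by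
    classical
    set Fc := Finset.univ.filter frac with hFc_def
    have hFcne : Fc.Nonempty := ⟨(i0, j0), Finset.mem_filter.mpr ⟨Finset.mem_univ _, hfr0⟩⟩
    set εA := Fc.inf' hFcne (fun p => f p.1 p.2 / (|G p.1 p.2| + 1)) with hεA_def
    set Cs := Finset.univ.filter (fun j => colG j ≠ 0) with hCs_def
    set εB := if h : Cs.Nonempty then
        Cs.inf' h (fun j => min ((σcol j - (lb j : ℝ)) / (|colG j| + 1))
          (((ub j : ℝ) - σcol j) / (|colG j| + 1))) else 1 with hεB_def
    have hεA : 0 < εA := by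
      rw [hεA_def, Finset.lt_inf'_iff]
      intro p hp
      have hfp : frac p := (Finset.mem_filter.mp hp).2
      have h0 : 0 < f p.1 p.2 := lt_of_le_of_ne (hpos p.1 p.2) (Ne.symm hfp.1)
      positivity
    have hεB : 0 < εB := by
      rw [hεB_def]
      split
      · next h =>
        rw [Finset.lt_inf'_iff]
        intro j hj
        have hcg : colG j ≠ 0 := (Finset.mem_filter.mp hj).2
        obtain ⟨h1, h2⟩ := hfree j hcg
        have hd : (0:ℝ) < |colG j| + 1 := by positivity
        exact lt_min (div_pos (by linarith) hd) (div_pos (by linarith) hd)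
      · norm_num
    refine ⟨min εA εB, lt_min hεA hεB, ?_, ?_⟩
    · intro p hp
      have hpmem : p ∈ Fc := Finset.mem_filter.mpr ⟨Finset.mem_univ _, hp⟩
      have h1 : min εA εB ≤ f p.1 p.2 / (|G p.1 p.2| + 1) :=
        (min_le_left _ _).trans (Finset.inf'_le _ hpmem)
      have hd : (0:ℝ) < |G p.1 p.2| + 1 := by positivity
      have h2 : min εA εB * (|G p.1 p.2| + 1) ≤ f p.1 p.2 := (le_div_iff₀ hd).mp h1
      have h3 : min εA εB * (|G p.1 p.2| + 1) =
          min εA εB * |G p.1 p.2| + min εA εB := by ring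
      linarith [lt_min hεA hεB]
    · intro j hj
      have hjmem : j ∈ Cs := Finset.mem_filter.mpr ⟨Finset.mem_univ _, hj⟩
      have hmin : min εA εB ≤ min ((σcol j - (lb j : ℝ)) / (|colG j| + 1))
          (((ub j : ℝ) - σcol j) / (|colG j| + 1)) := by
        refine (min_le_right _ _).trans ?_
        rw [hεB_def, dif_pos ⟨j, hjmem⟩]
        exact Finset.inf'_le _ hjmem
      have hd : (0:ℝ) < |colG j| + 1 := by positivity
      have h3 : min εA εB * (|colG j| + 1) =
          min εA εB * |colG j| + min εA εB := by ring
      constructor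
      · have h2 := (le_div_iff₀ hd).mp (hmin.trans (min_le_left _ _))
        linarith [lt_min hεA hεB]
      · have h2 := (le_div_iff₀ hd).mp (hmin.trans (min_le_right _ _))
        linarith [lt_min hεA hεB]
  obtain ⟨ε, hε, hεF, hεC⟩ := heps
  -- perturbed points are in Q
  have hmemQ : ∀ t : ℝ, |t| ≤ ε → (fun i j => f i j + t * G i j) ∈ Q := by
    intro t ht
    rw [hQ]
    simp only [Set.mem_setOf_eq]
    refine ⟨?_, ?_, ?_, ?_, ?_⟩
    · intro i j
      by_cases hfij : frac (i, j)
      · have h1 : |t * G i j| ≤ ε * |G i j| := by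
          rw [abs_mul]; exact mul_le_mul_of_nonneg_right ht (abs_nonneg _)
        have h2 := hεF (i, j) hfij
        have h3 := neg_abs_le (t * G i j)
        linarith
      · rw [hGsupp i j hfij, mul_zero, add_zero]; exact hpos i j
    · intro i
      rw [Finset.sum_add_distrib, ← Finset.mul_sum, hGrow i, hrow i, mul_zero, add_zero]
    · intro j
      have hsum : ∑ i, (f i j + t * G i j) = σcol j + t * colG j := by
        rw [Finset.sum_add_distrib, ← Finset.mul_sum]
      by_cases hcg : colG j = 0
      · rw [hsum, hcg, mul_zero, add_zero]; exact hcolb j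
      · obtain ⟨hl, hu⟩ := hεC j hcg
        have habs : |t * colG j| ≤ ε * |colG j| := by
          rw [abs_mul]; exact mul_le_mul_of_nonneg_right ht (abs_nonneg _)
        rw [hsum]
        constructor
        · have := neg_abs_le (t * colG j); linarith
        · have := le_abs_self (t * colG j); linarith
    · intro p hp
      have h0 : f p.1 p.2 = 0 := hZs p hp
      have hG0 : G p.1 p.2 = 0 := by
        have := hGsupp p.1 p.2 (by rw [Prod.mk.eta]; exact fun h => h.1 h0)
        exact this
      simp only [h0, hG0, mul_zero, add_zero]
    · intro p hp
      have h0 : f p.1 p.2 = 1 := hOs p hp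
      have hG0 : G p.1 p.2 = 0 := by
        have := hGsupp p.1 p.2 (by rw [Prod.mk.eta]; exact fun h => h.2 h0)
        exact this
      simp only [h0, hG0, mul_zero, add_zero]
  have h1 : (fun i j => f i j + ε * G i j) ∈ Q := hmemQ ε (by rw [abs_of_pos hε])
  have h2 : (fun i j => f i j + (-ε) * G i j) ∈ Q := hmemQ (-ε) (by rw [abs_neg, abs_of_pos hε])
  have hseg : f ∈ openSegment ℝ (fun i j => f i j + ε * G i j) (fun i j => f i j + (-ε) * G i j) := by
    refine ⟨1/2, 1/2, by norm_num, by norm_num, by norm_num, ?_⟩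
    funext i j
    simp only [Pi.add_apply, Pi.smul_apply, smul_eq_mul]
    ring
  have heq1 := hext h1 h2 hseg
  have hptw : f q.1.1 q.1.2 + ε * G q.1.1 q.1.2 = f q.1.1 q.1.2 :=
    congrFun (congrFun heq1 q.1.1) q.1.2
  have hz : ε * G q.1.1 q.1.2 = 0 := by linarith
  rw [hGq] at hz
  rcases mul_eq_zero.mp hz with h | h
  · exact absurd h (ne_of_gt hε)
  · exact hq (by simpa using h)
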